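/- Let μ and ν be probability measures on a measurable space and X a random variable with law μ. Then, possibly on an enlarged probability space, there exists a random variable Y with law ν such that P(X = Y) = 1 - ‖μ - ν‖, where ‖μ - ν‖ denotes the total variation distance. -/

import Mathlib

open MeasureTheory

/-- Total variation distance `‖μ - ν‖ = sup_{A measurable} |μ(A) - ν(A)|`. -/
noncomputable def tvDist {E : Type} [MeasurableSpace E] (μ ν : Measure E) : ℝ :=
  ⨆ A : {s : Set E // MeasurableSet s}, |(μ A.1).toReal - (ν A.1).toReal|

/-- Maximal coupling: for probability measures `μ` and `ν` there is a probability
space carrying random variables `X ~ μ` and `Y ~ ν` with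
`P(X = Y) = 1 - ‖μ - ν‖`. -/
theorem maximal_coupling {E : Type} [MeasurableSpace E]
    (μ ν : Measure E) [IsProbabilityMeasure μ] [IsProbabilityMeasure ν] :
    ∃ (Ω : Type) (mΩ : MeasurableSpace Ω) (P : Measure Ω) (_ : IsProbabilityMeasure P)
      (X Y : Ω → E), Measurable X ∧ Measurable Y ∧
        Measure.map X P = μ ∧ Measure.map Y P = ν ∧
        (P {ω | X ω = Y ω}).toReal = 1 - tvDist μ ν := by
  classical
  set ρ : Measure E := μ + ν with hρ
  have hμρ : μ ≪ ρ := Measure.absolutelyContinuous_of_le (Measure.le_add_right le_rfl)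
  have hνρ : ν ≪ ρ := Measure.absolutelyContinuous_of_le (Measure.le_add_left le_rfl)
  set g : E → ENNReal := μ.rnDeriv ρ with hgdef
  set h : E → ENNReal := ν.rnDeriv ρ with hhdef
  have hg : Measurable g := Measure.measurable_rnDeriv _ _
  have hh : Measurable h := Measure.measurable_rnDeriv _ _
  set m : E → ENNReal := fun x => min (g x) (h x) with hmdef
  have hm : Measurable m := hg.min hh
  set lam : Measure E := ρ.withDensity m with hlamdef
  set ξ : Measure E := ρ.withDensity (fun x => g x - m x) with hξdef
  set η : Measure E := ρ.withDensity (fun x => h x - m x) with hηdef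
  have hμeq : lam + ξ = μ := by
    rw [hlamdef, hξdef, ← withDensity_add_left hm]
    have : (m + fun x => g x - m x) = g := by
      funext x
      simp only [Pi.add_apply]
      exact add_tsub_cancel_of_le (min_le_left _ _)
    rw [this, Measure.withDensity_rnDeriv_eq _ _ hμρ]
  have hνeq : lam + η = ν := by
    rw [hlamdef, hηdef, ← withDensity_add_left hm]
    have : (m + fun x => h x - m x) = h := by
      funext x
      simp only [Pi.add_apply]
      exact add_tsub_cancel_of_le (min_le_right _ _)
    rw [this, Measure.withDensity_rnDeriv_eq _ _ hνρ]
  set p : ENNReal := lam Set.univ with hpdef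
  have hsumμ : p + ξ Set.univ = 1 := by
    rw [hpdef, ← Measure.add_apply, hμeq, measure_univ]
  have hsumν : p + η Set.univ = 1 := by
    rw [hpdef, ← Measure.add_apply, hνeq, measure_univ]
  have hp1 : p ≤ 1 := by
    calc p ≤ p + ξ Set.univ := le_self_add
    _ = 1 := hsumμ
  have hpT : p ≠ ⊤ := (hp1.trans_lt ENNReal.one_lt_top).ne
  set a : ENNReal := 1 - p with hadef
  have hξu : ξ Set.univ = a := by
    rw [hadef]
    exact ENNReal.eq_sub_of_add_eq hpT (by rw [add_comm]; exact hsumμ)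
  have hηu : η Set.univ = a := by
    rw [hadef]
    exact ENNReal.eq_sub_of_add_eq hpT (by rw [add_comm]; exact hsumν)
  have ha1 : a ≤ 1 := tsub_le_self
  have haT : a ≠ ⊤ := (ha1.trans_lt ENNReal.one_lt_top).ne
  haveI : IsFiniteMeasure lam := ⟨by rw [← hpdef]; exact hp1.trans_lt ENNReal.one_lt_top⟩
  haveI : IsFiniteMeasure ξ := ⟨by rw [hξu]; exact ha1.trans_lt ENNReal.one_lt_top⟩
  haveI : IsFiniteMeasure η := ⟨by rw [hηu]; exact ha1.trans_lt ENNReal.one_lt_top⟩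
  set S : Set E := {x | g x ≤ h x} with hSdef
  have hS : MeasurableSet S := measurableSet_le hg hh
  have hξS : ξ S = 0 := by
    rw [hξdef, withDensity_apply _ hS]
    have : ∀ x ∈ S, g x - m x = 0 := by
      intro x hx
      have hx' : g x ≤ h x := hx
      exact tsub_eq_zero_iff_le.mpr (le_min le_rfl hx')
    calc ∫⁻ x in S, (g x - m x) ∂ρ = ∫⁻ _ in S, 0 ∂ρ :=
          setLIntegral_congr_fun hS this
    _ = 0 := lintegral_zero
  have hηSc : η Sᶜ = 0 := by
    rw [hηdef, withDensity_apply _ hS.compl]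
    have : ∀ x ∈ Sᶜ, h x - m x = 0 := by
      intro x hx
      have hx2 : ¬ g x ≤ h x := hx
      have hx' : h x ≤ g x := (lt_of_not_ge hx2).le
      exact tsub_eq_zero_iff_le.mpr (le_min hx' le_rfl)
    calc ∫⁻ x in Sᶜ, (h x - m x) ∂ρ = ∫⁻ _ in Sᶜ, 0 ∂ρ :=
          setLIntegral_congr_fun hS.compl this
    _ = 0 := lintegral_zero
  have hξSc : ξ Sᶜ = a := by
    have := measure_add_measure_compl (μ := ξ) hS
    rw [hξS, zero_add, hξu] at this
    exact this
  -- total variation distance equals a.toReal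
  have hμA : ∀ A : Set E, μ A = lam A + ξ A := fun A => by
    rw [← hμeq, Measure.add_apply]
  have hνA : ∀ A : Set E, ν A = lam A + η A := fun A => by
    rw [← hνeq, Measure.add_apply]
  have htv : tvDist μ ν = a.toReal := by
    apply le_antisymm
    · apply ciSup_le
      rintro ⟨A, hA⟩
      simp only
      rw [hμA A, hνA A, ENNReal.toReal_add (measure_ne_top _ _) (measure_ne_top _ _),
        ENNReal.toReal_add (measure_ne_top _ _) (measure_ne_top _ _)]
      have hx : (ξ A).toReal ≤ a.toReal := by
        apply ENNReal.toReal_mono haT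
        rw [← hξu]; exact measure_mono (Set.subset_univ _)
      have hy : (η A).toReal ≤ a.toReal := by
        apply ENNReal.toReal_mono haT
        rw [← hηu]; exact measure_mono (Set.subset_univ _)
      have hx0 : (0:ℝ) ≤ (ξ A).toReal := ENNReal.toReal_nonneg
      have hy0 : (0:ℝ) ≤ (η A).toReal := ENNReal.toReal_nonneg
      rw [abs_sub_le_iff]
      constructor <;> linarith
    · have hbdd : BddAbove (Set.range fun A : {s : Set E // MeasurableSet s} =>
          |(μ A.1).toReal - (ν A.1).toReal|) := by
        refine ⟨2, ?_⟩
        rintro x ⟨⟨A, hA⟩, rfl⟩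
        simp only
        have h1 : (μ A).toReal ≤ 1 := by
          apply ENNReal.toReal_le_of_le_ofReal one_pos.le
          simpa using prob_le_one (μ := μ) (s := A)
        have h2 : (ν A).toReal ≤ 1 := by
          apply ENNReal.toReal_le_of_le_ofReal one_pos.le
          simpa using prob_le_one (μ := ν) (s := A)
        have h3 : (0:ℝ) ≤ (μ A).toReal := ENNReal.toReal_nonneg
        have h4 : (0:ℝ) ≤ (ν A).toReal := ENNReal.toReal_nonneg
        rw [abs_sub_le_iff] at *
        constructor <;> linarith
      refine le_trans (le_of_eq ?_) (le_ciSup hbdd ⟨Sᶜ, hS.compl⟩)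
      simp only
      rw [hμA Sᶜ, hνA Sᶜ, hξSc, hηSc, add_zero,
        ENNReal.toReal_add (measure_ne_top _ _) haT]
      rw [abs_of_nonneg (by linarith [ENNReal.toReal_nonneg (a := a)] : (0:ℝ) ≤
        (lam Sᶜ).toReal + a.toReal - (lam Sᶜ).toReal)]
      ring
  have hfinal : (1:ℝ) - tvDist μ ν = p.toReal := by
    rw [htv, hadef, ENNReal.toReal_sub_of_le hp1 ENNReal.one_ne_top]
    simp
  by_cases hcase : p = 1
  · -- μ = ν, trivial coupling
    have hξ0 : ξ = 0 := by
      apply Measure.measure_univ_eq_zero.mp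
      rw [hξu, hadef, hcase, tsub_self]
    have hη0 : η = 0 := by
      apply Measure.measure_univ_eq_zero.mp
      rw [hηu, hadef, hcase, tsub_self]
    have hμν : μ = ν := by rw [← hμeq, ← hνeq, hξ0, hη0]
    refine ⟨E, ‹_›, μ, inferInstance, id, id, measurable_id, measurable_id,
      Measure.map_id, by rw [Measure.map_id, hμν], ?_⟩
    have : {ω : E | id ω = id ω} = Set.univ := by ext x; simp
    rw [this, measure_univ, hfinal, hcase]
  · have ha0 : a ≠ 0 := by
      rw [hadef]
      intro hc
      exact hcase (le_antisymm hp1 (tsub_eq_zero_iff_le.mp hc))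
    set f : E → E × E := fun x => (x, x) with hfdef
    have hf : Measurable f := measurable_id.prodMk measurable_id
    set P : Measure (E × E) := Measure.map f lam + a⁻¹ • (ξ.prod η) with hPdef
    have hProdUniv : (ξ.prod η) Set.univ = a * a := by
      rw [← Set.univ_prod_univ, Measure.prod_prod, hξu, hηu]
    have hPuniv : P Set.univ = 1 := by
      rw [hPdef, Measure.add_apply, Measure.smul_apply, smul_eq_mul, hProdUniv,
        Measure.map_apply hf MeasurableSet.univ, Set.preimage_univ, ← hpdef,
        ← mul_assoc, ENNReal.inv_mul_cancel ha0 haT, one_mul, hadef,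
        add_tsub_cancel_of_le hp1]
    haveI hPprob : IsProbabilityMeasure P := ⟨hPuniv⟩
    have hmapfst : Measure.map Prod.fst P = μ := by
      rw [hPdef, Measure.map_add _ _ measurable_fst, Measure.map_smul,
        Measure.map_map measurable_fst hf, Measure.map_fst_prod, hηu]
      have : (Prod.fst ∘ f) = id := rfl
      rw [this, Measure.map_id, smul_smul, ENNReal.inv_mul_cancel ha0 haT, one_smul, hμeq]
    have hmapsnd : Measure.map Prod.snd P = ν := by
      rw [hPdef, Measure.map_add _ _ measurable_snd, Measure.map_smul,
        Measure.map_map measurable_snd hf, Measure.map_snd_prod, hξu]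
      have : (Prod.snd ∘ f) = id := rfl
      rw [this, Measure.map_id, smul_smul, ENNReal.inv_mul_cancel ha0 haT, one_smul, hνeq]
    set D : Set (E × E) := {z | z.1 = z.2} with hDdef
    have hprodD : (ξ.prod η) D = 0 := by
      apply le_antisymm _ zero_le
      have hsub : D ⊆ (S ×ˢ S) ∪ (Sᶜ ×ˢ Sᶜ) := by
        rintro ⟨x, y⟩ hxy
        simp only [hDdef, Set.mem_setOf_eq] at hxy
        subst hxy
        by_cases hx : x ∈ S
        · exact Or.inl ⟨hx, hx⟩
        · exact Or.inr ⟨hx, hx⟩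
      calc (ξ.prod η) D ≤ (ξ.prod η) ((S ×ˢ S) ∪ (Sᶜ ×ˢ Sᶜ)) := measure_mono hsub
      _ ≤ (ξ.prod η) (S ×ˢ S) + (ξ.prod η) (Sᶜ ×ˢ Sᶜ) := measure_union_le _ _
      _ = ξ S * η S + ξ Sᶜ * η Sᶜ := by rw [Measure.prod_prod, Measure.prod_prod]
      _ = 0 := by rw [hξS, hηSc, zero_mul, mul_zero, add_zero]
    have hmapD : (Measure.map f lam) D = p := by
      apply le_antisymm
      · calc (Measure.map f lam) D ≤ (Measure.map f lam) Set.univ :=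
              measure_mono (Set.subset_univ _)
        _ = p := by rw [Measure.map_apply hf MeasurableSet.univ, Set.preimage_univ]
      · have := Measure.le_map_apply (μ := lam) hf.aemeasurable D
        have hpre : f ⁻¹' D = Set.univ := by
          ext x; simp [hfdef, hDdef]
        rwa [hpre] at this
    have hPD : P D = p := by
      rw [hPdef, Measure.add_apply, Measure.smul_apply, smul_eq_mul, hprodD, mul_zero,
        add_zero, hmapD]
    refine ⟨E × E, inferInstance, P, hPprob, Prod.fst, Prod.snd, measurable_fst,
      measurable_snd, hmapfst, hmapsnd, ?_⟩
    have hset : {ω : E × E | ω.1 = ω.2} = D := rfl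
    rw [hset, hPD, hfinal]
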